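/- arXiv:cs/0603094 — 2 statements merged into one kernel-verified Lean document; each statement's English description precedes it below -/
import Mathlib

section
/- If (δ, δ̃) is a solution of the fixed-point system δ = f(δ, δ̃, Q̃), δ̃ = f̃(δ, δ̃, Q̃), then the partial derivatives of V(κ, κ̃, Q̃) with respect to κ and κ̃ vanish at (δ, δ̃): ∂V/∂κ(δ, δ̃, Q̃) = 0 and ∂V/∂κ̃(δ, δ̃, Q̃) = 0. -/
open Matrix Polynomial
open scoped ComplexOrder Classical

section VAux

/-- derivative of an affine determinant path -/
lemma hasDerivAt_det_affine {m : ℕ} (X0 Y : Matrix (Fin m) (Fin m) ℂ) (t₀ : ℝ)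
    (h : IsUnit (X0 + (t₀:ℂ) • Y).det) :
    HasDerivAt (fun s : ℝ => (X0 + (s:ℂ) • Y).det)
      ((X0 + (t₀:ℂ) • Y).det * (((X0 + (t₀:ℂ) • Y)⁻¹ * Y).trace)) t₀ := by
  set X₁ := X0 + (t₀:ℂ) • Y with hX₁
  set Z := X₁⁻¹ * Y with hZ
  set q : ℂ[X] := (det (1 + (X : ℂ[X]) • Z.map C)).divX.divX with hq
  have key : ∀ s : ℝ, (X0 + (s:ℂ) • Y).det
      = X₁.det * (1 + Z.trace * ((s:ℂ) - t₀) + q.eval ((s:ℂ) - t₀) * (((s:ℂ) - t₀) * ((s:ℂ) - t₀))) := by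
    intro s
    have h1 : X0 + (s:ℂ) • Y = X₁ * (1 + ((s:ℂ) - t₀) • Z) := by
      rw [Matrix.mul_add, Matrix.mul_one, Matrix.mul_smul, hZ,
        Matrix.mul_nonsing_inv_cancel_left _ _ h, hX₁]
      module
    rw [h1, Matrix.det_mul, Matrix.det_one_add_smul, pow_two]
  have hc : HasDerivAt (fun s : ℝ => ((s:ℂ) - (t₀:ℂ))) 1 t₀ := by
    simpa using (Complex.ofRealCLM.hasDerivAt (x := t₀)).sub_const (t₀:ℂ)
  have hqq : HasDerivAt (fun s : ℝ => q.eval ((s:ℂ) - t₀)) (q.derivative.eval 0) t₀ := by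
    have := (q.hasDerivAt ((t₀:ℂ) - t₀)).scomp t₀ hc
    simpa [Function.comp_def] using this
  have H : HasDerivAt
      (fun s : ℝ => X₁.det * (1 + Z.trace * ((s:ℂ) - t₀) + q.eval ((s:ℂ) - t₀) * (((s:ℂ) - t₀) * ((s:ℂ) - t₀))))
      (X₁.det * Z.trace) t₀ := by
    have h2 := hc.mul hc
    have h3 := ((hc.const_mul Z.trace).const_add 1).add (hqq.mul h2)
    have h4 := h3.const_mul X₁.det
    convert h4 using 1
    · rfl
    · rfl
    · simp
  have : (fun s : ℝ => (X0 + (s:ℂ) • Y).det)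
      = fun s : ℝ => X₁.det * (1 + Z.trace * ((s:ℂ) - t₀) + q.eval ((s:ℂ) - t₀) * (((s:ℂ) - t₀) * ((s:ℂ) - t₀))) :=
    funext key
  rw [this]
  exact H

/-- log of the real part of an affine determinant path -/
lemma hasDerivAt_log_det_affine {m : ℕ} (X0 Y : Matrix (Fin m) (Fin m) ℂ) (t₀ : ℝ)
    (hd : 0 < (X0 + (t₀:ℂ) • Y).det) :
    HasDerivAt (fun s : ℝ => Real.log ((X0 + (s:ℂ) • Y).det.re))
      ((((X0 + (t₀:ℂ) • Y)⁻¹ * Y).trace).re) t₀ := by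
  have hre : 0 < (X0 + (t₀:ℂ) • Y).det.re := (Complex.lt_def.mp hd).1
  have him : (X0 + (t₀:ℂ) • Y).det.im = 0 := ((Complex.lt_def.mp hd).2).symm
  have hu : IsUnit (X0 + (t₀:ℂ) • Y).det := by
    refine isUnit_iff_ne_zero.mpr ?_
    intro hz; rw [hz] at hre; simp at hre
  have h1 := hasDerivAt_det_affine X0 Y t₀ hu
  have h2 : HasDerivAt (fun s : ℝ => ((X0 + (s:ℂ) • Y).det).re)
      (((X0 + (t₀:ℂ) • Y).det * (((X0 + (t₀:ℂ) • Y)⁻¹ * Y).trace)).re) t₀ :=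
    (Complex.reCLM.hasFDerivAt.comp_hasDerivAt t₀ h1)
  have h3 := h2.log hre.ne'
  convert h3 using 1
  rw [Complex.mul_re, him, zero_mul, sub_zero, mul_comm, mul_div_assoc, div_self hre.ne', mul_one]

/-- nonnegative real scaling preserves `PosSemidef` (over ℂ). -/
lemma posSemidef_ofReal_smul {m : ℕ} {x : ℝ} (hx : 0 ≤ x)
    {T : Matrix (Fin m) (Fin m) ℂ} (hT : T.PosSemidef) : ((x:ℂ) • T).PosSemidef := by
  constructor
  · unfold Matrix.IsHermitian
    rw [conjTranspose_smul, hT.1]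
    congr 1
    simp
  · exact (hT.smul (Complex.zero_le_real.mpr hx)).2

lemma posDef_one_add_smul' {m : ℕ} {x : ℝ} (hx : 0 ≤ x)
    {R : Matrix (Fin m) (Fin m) ℂ} (hR : R.PosSemidef) : (1 + (x:ℂ) • R).PosDef :=
  Matrix.PosDef.add_posSemidef Matrix.PosDef.one (posSemidef_ofReal_smul hx hR)

/-- determinant sandwich identity -/
lemma det_one_add_sandwich {m : ℕ} (sq M : Matrix (Fin m) (Fin m) ℂ) :
    (1 + (sq * sq) * M).det = (1 + sq * M * sq).det := by
  have h1 : 1 + (sq * sq) * M = 1 + sq * (sq * M) := by rw [Matrix.mul_assoc]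
  rw [h1, Matrix.det_one_add_mul_comm, Matrix.mul_assoc]

lemma inv_one_add_sandwich {m : ℕ} (sq M : Matrix (Fin m) (Fin m) ℂ)
    (hu : IsUnit (1 + sq * M * sq).det) :
    (1 + (sq * sq) * M)⁻¹ * (sq * sq) = sq * (1 + sq * M * sq)⁻¹ * sq := by
  have hu2 : IsUnit (1 + (sq * sq) * M).det := by
    rw [det_one_add_sandwich]; exact hu
  have h1 : (1 + sq * M * sq) * (1 + sq * M * sq)⁻¹ = 1 := Matrix.mul_nonsing_inv _ hu
  have key : (1 + (sq * sq) * M) * (sq * (1 + sq * M * sq)⁻¹ * sq) = sq * sq := by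
    have expand : (1 + (sq * sq) * M) * (sq * (1 + sq * M * sq)⁻¹ * sq)
        = sq * ((1 + sq * M * sq) * (1 + sq * M * sq)⁻¹) * sq := by
      noncomm_ring
    rw [expand, h1, Matrix.mul_one]
  calc (1 + (sq * sq) * M)⁻¹ * (sq * sq)
      = (1 + (sq * sq) * M)⁻¹ * ((1 + (sq * sq) * M) * (sq * (1 + sq * M * sq)⁻¹ * sq)) := by rw [key]
    _ = sq * (1 + sq * M * sq)⁻¹ * sq := Matrix.nonsing_inv_mul_cancel_left _ _ hu2

end VAux

/-- Positive semidefinite square root (junk value `0` off the PSD cone). -/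
noncomputable def psqrt {n : ℕ} (M : Matrix (Fin n) (Fin n) ℂ) : Matrix (Fin n) (Fin n) ℂ :=
  if h : M.PosSemidef then (h.1.eigenvectorUnitary : Matrix (Fin n) (Fin n) ℂ) *
    diagonal (((↑) : ℝ → ℂ) ∘ (√·) ∘ h.1.eigenvalues) *
    (star h.1.eigenvectorUnitary : Matrix (Fin n) (Fin n) ℂ) else 0

lemma psqrt_mul_self {n : ℕ} {M : Matrix (Fin n) (Fin n) ℂ} (hM : M.PosSemidef) :
    psqrt M * psqrt M = M := by
  rw [psqrt, dif_pos hM]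
  have hU : (star hM.1.eigenvectorUnitary : Matrix (Fin n) (Fin n) ℂ) *
      (hM.1.eigenvectorUnitary : Matrix (Fin n) (Fin n) ℂ) = 1 := Unitary.coe_star_mul_self _
  conv_rhs => rw [hM.1.spectral_theorem, Unitary.conjStarAlgAut_apply]
  rw [show ∀ U D S : Matrix (Fin n) (Fin n) ℂ, U * D * S * (U * D * S) = U * (D * (S * U) * D) * S
    from fun U D S => by simp only [Matrix.mul_assoc], hU, Matrix.mul_one, diagonal_mul_diagonal]
  congr 3
  funext i
  simp only [Function.comp_apply]
  rw [← Complex.ofReal_mul, Real.mul_self_sqrt (hM.eigenvalues_nonneg i)]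
  rfl

lemma psqrt_posSemidef {n : ℕ} {M : Matrix (Fin n) (Fin n) ℂ} (hM : M.PosSemidef) :
    (psqrt M).PosSemidef := by
  rw [psqrt, dif_pos hM]
  have hD : (diagonal (((↑) : ℝ → ℂ) ∘ (√·) ∘ hM.1.eigenvalues)).PosSemidef :=
    Matrix.posSemidef_diagonal_iff.mpr fun i => by
      simp only [Function.comp_apply]; exact_mod_cast Real.sqrt_nonneg _
  have := hD.mul_mul_conjTranspose_same (hM.1.eigenvectorUnitary : Matrix (Fin n) (Fin n) ℂ)
  simpa [Matrix.star_eq_conjTranspose] using this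

/-- `T(Q̃) = Q̃^{1/2} T Q̃^{1/2}`. -/
noncomputable def TQ {n : ℕ} (T Q : Matrix (Fin n) (Fin n) ℂ) : Matrix (Fin n) (Fin n) ℂ :=
  psqrt Q * T * psqrt Q

/-- `f(κ,κ̃) = (1/n)·Tr[R(σ²(I + κ̃R) + A Q̃^{1/2}(I + κ T(Q̃))⁻¹ Q̃^{1/2} Aᴴ)⁻¹]`. -/
noncomputable def fFP {N n : ℕ} (σ2 : ℝ) (A : Matrix (Fin N) (Fin n) ℂ)
    (R : Matrix (Fin N) (Fin N) ℂ) (T Q : Matrix (Fin n) (Fin n) ℂ)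
    (κ κt : ℝ) : ℝ :=
  ((1 : ℝ) / n) *
    ((R * (((σ2 : ℂ)) • (1 + ((κt : ℂ)) • R) +
        A * psqrt Q * (1 + ((κ : ℂ)) • TQ T Q)⁻¹ * psqrt Q * Aᴴ)⁻¹).trace).re

/-- `f̃(κ,κ̃) = (1/n)·Tr[T(Q̃)(σ²(I + κT(Q̃)) + Q̃^{1/2} Aᴴ (I + κ̃R)⁻¹ A Q̃^{1/2})⁻¹]`. -/
noncomputable def fFPt {N n : ℕ} (σ2 : ℝ) (A : Matrix (Fin N) (Fin n) ℂ)
    (R : Matrix (Fin N) (Fin N) ℂ) (T Q : Matrix (Fin n) (Fin n) ℂ)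
    (κ κt : ℝ) : ℝ :=
  ((1 : ℝ) / n) *
    ((TQ T Q * (((σ2 : ℂ)) • (1 + ((κ : ℂ)) • TQ T Q) +
        psqrt Q * Aᴴ * (1 + ((κt : ℂ)) • R)⁻¹ * A * psqrt Q)⁻¹).trace).re

/-- `G(κ,κ̃) = [κT + (1/σ²) Aᴴ(I + κ̃R)⁻¹A]^{1/2}`. -/
noncomputable def Gmat {N n : ℕ} (σ2 : ℝ) (A : Matrix (Fin N) (Fin n) ℂ)
    (R : Matrix (Fin N) (Fin N) ℂ) (T : Matrix (Fin n) (Fin n) ℂ)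
    (κ κt : ℝ) : Matrix (Fin n) (Fin n) ℂ :=
  psqrt (((κ : ℂ)) • T + ((σ2 : ℂ))⁻¹ • (Aᴴ * (1 + ((κt : ℂ)) • R)⁻¹ * A))

/-- `V(κ,κ̃,Q̃) = log det[I + G(κ,κ̃)Q̃G(κ,κ̃)] + log det[I + κ̃R] − σ²nκκ̃`. -/
noncomputable def Vfun {N n : ℕ} (σ2 : ℝ) (A : Matrix (Fin N) (Fin n) ℂ)
    (R : Matrix (Fin N) (Fin N) ℂ) (T Q : Matrix (Fin n) (Fin n) ℂ)
    (κ κt : ℝ) : ℝ :=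
  Real.log ((1 + Gmat σ2 A R T κ κt * Q * Gmat σ2 A R T κ κt).det.re) +
    Real.log ((1 + ((κt : ℂ)) • R).det.re) - σ2 * n * κ * κt

/-- If `(δ, δ̃)` solves the fixed-point system `δ = f(δ,δ̃,Q̃)`, `δ̃ = f̃(δ,δ̃,Q̃)`,
then the partial derivatives of `V(·,·,Q̃)` vanish at `(δ, δ̃)`. -/
theorem Vfun_deriv_vanish_at_fixed_point {N n : ℕ} (σ2 : ℝ) (hσ : 0 < σ2)
    (A : Matrix (Fin N) (Fin n) ℂ) (R : Matrix (Fin N) (Fin N) ℂ)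
    (T Q : Matrix (Fin n) (Fin n) ℂ)
    (hR : R.PosSemidef) (hT : T.PosSemidef) (hQ : Q.PosDef)
    (δ δt : ℝ) (hδ : 0 < δ) (hδt : 0 < δt)
    (hfix : δ = fFP σ2 A R T Q δ δt) (hfixt : δt = fFPt σ2 A R T Q δ δt) :
    HasDerivAt (fun x => Vfun σ2 A R T Q x δt) 0 δ ∧
    HasDerivAt (fun x => Vfun σ2 A R T Q δ x) 0 δt := by
  have hσ2ne : (σ2:ℂ) ≠ 0 := by exact_mod_cast Complex.ofReal_ne_zero.mpr hσ.ne'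
  -- n ≠ 0
  have hn : (n:ℝ) ≠ 0 := by
    intro h0
    rw [fFPt, h0] at hfixt
    simp at hfixt
    exact absurd hfixt hδt.ne'
  -- square root of Q
  set sq : Matrix (Fin n) (Fin n) ℂ := psqrt Q with hsqdef
  have hQpsd : Q.PosSemidef := hQ.posSemidef
  have hsqQ : sq * sq = Q := by
    rw [hsqdef]; exact psqrt_mul_self hQpsd
  have hsqPSD : sq.PosSemidef := by
    rw [hsqdef]; exact psqrt_posSemidef hQpsd
  have hsqH : sqᴴ = sq := hsqPSD.isHermitian
  have hTQeq : TQ T Q = sq * T * sq := rfl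
  have hTQpsd : (TQ T Q).PosSemidef := by
    rw [hTQeq]
    have h' := hT.conjTranspose_mul_mul_same sq
    rwa [hsqH] at h'
  constructor
  · -- ∂/∂κ
    -- the matrix family
    set K : Matrix (Fin n) (Fin n) ℂ := Aᴴ * (1 + ((δt:ℂ)) • R)⁻¹ * A with hKdef
    have hB1pos : ((1 + ((δt:ℂ)) • R)⁻¹).PosDef := (posDef_one_add_smul' hδt.le hR).inv
    have hKpsd : K.PosSemidef := hB1pos.posSemidef.conjTranspose_mul_mul_same A
    set Mx : ℝ → Matrix (Fin n) (Fin n) ℂ :=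
      fun x => ((x:ℂ)) • T + ((σ2:ℂ))⁻¹ • K with hMxdef
    have hMpsd : ∀ x : ℝ, 0 ≤ x → (Mx x).PosSemidef := by
      intro x hx
      refine (posSemidef_ofReal_smul hx hT).add ?_
      rw [← Complex.ofReal_inv]
      exact posSemidef_ofReal_smul (by positivity) hKpsd
    have hGM : ∀ x : ℝ, Gmat σ2 A R T x δt = psqrt (Mx x) := fun x => rfl
    have hdetEq : ∀ x : ℝ, 0 ≤ x →
        (1 + Gmat σ2 A R T x δt * Q * Gmat σ2 A R T x δt).det = (1 + Q * Mx x).det := by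
      intro x hx
      have hM := hMpsd x hx
      have hGG : psqrt (Mx x) * psqrt (Mx x) = Mx x := by
        exact psqrt_mul_self hM
      rw [hGM]
      calc (1 + psqrt (Mx x) * Q * psqrt (Mx x)).det
          = (1 + psqrt (Mx x) * (Q * psqrt (Mx x))).det := by rw [Matrix.mul_assoc]
        _ = (1 + Q * psqrt (Mx x) * psqrt (Mx x)).det := Matrix.det_one_add_mul_comm _ _
        _ = (1 + Q * Mx x).det := by rw [Matrix.mul_assoc, hGG]
    -- affine representation
    set Y : Matrix (Fin n) (Fin n) ℂ := Q * T with hYdef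
    set X0 : Matrix (Fin n) (Fin n) ℂ := 1 + ((σ2:ℂ))⁻¹ • (Q * K) with hX0def
    have hrepr : ∀ x : ℝ, (1 : Matrix (Fin n) (Fin n) ℂ) + Q * Mx x = X0 + ((x:ℂ)) • Y := by
      intro x
      rw [hMxdef]
      simp only [Matrix.mul_add, Matrix.mul_smul, hX0def, hYdef]
      module
    -- positivity of determinant at δ
    set H : Matrix (Fin n) (Fin n) ℂ := sq * Mx δ * sq with hHdef
    have hHpsd : H.PosSemidef := by
      rw [hHdef]
      have h' := (hMpsd δ hδ.le).conjTranspose_mul_mul_same sq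
      rwa [hsqH] at h'
    have h1H : (1 + H).PosDef := Matrix.PosDef.add_posSemidef Matrix.PosDef.one hHpsd
    have hdet2 : (1 + Q * Mx δ).det = (1 + H).det := by
      rw [← hsqQ, hHdef]; exact det_one_add_sandwich sq (Mx δ)
    have hdpos : (0:ℂ) < (1 + Q * Mx δ).det := by rw [hdet2]; exact h1H.det_pos
    have hdX0 : (0:ℂ) < (X0 + ((δ:ℂ)) • Y).det := by rw [← hrepr δ]; exact hdpos
    -- the log-derivative
    have hlog1 := hasDerivAt_log_det_affine X0 Y δ hdX0
    -- trace identity with the fixed point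
    have h1Hu : IsUnit (1 + H).det := isUnit_iff_ne_zero.mpr h1H.det_pos.ne'
    have h1Qu : IsUnit (1 + Q * Mx δ).det := by rw [hdet2]; exact h1Hu
    have hinv : (1 + Q * Mx δ)⁻¹ * Q = sq * (1 + H)⁻¹ * sq := by
      rw [← hsqQ, hHdef]
      exact inv_one_add_sandwich sq (Mx δ) (by rw [← hHdef]; exact h1Hu)
    have htr : ((X0 + ((δ:ℂ)) • Y)⁻¹ * Y).trace = ((1 + H)⁻¹ * (sq * T * sq)).trace := by
      rw [← hrepr δ, hYdef]
      have e1 : (1 + Q * Mx δ)⁻¹ * (Q * T) = sq * (1 + H)⁻¹ * sq * T := by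
        rw [← Matrix.mul_assoc, hinv]
      rw [e1]
      calc (sq * (1 + H)⁻¹ * sq * T).trace
          = ((sq * (1 + H)⁻¹) * (sq * T)).trace := by rw [Matrix.mul_assoc]
        _ = ((sq * T) * (sq * (1 + H)⁻¹)).trace := Matrix.trace_mul_comm _ _
        _ = ((sq * T * sq) * (1 + H)⁻¹).trace := by simp only [Matrix.mul_assoc]
        _ = ((1 + H)⁻¹ * (sq * T * sq)).trace := Matrix.trace_mul_comm _ _
    -- relate to fFPt
    have hDe : ((σ2 : ℂ)) • (1 + ((δ:ℂ)) • TQ T Q) +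
        psqrt Q * Aᴴ * (1 + ((δt:ℂ)) • R)⁻¹ * A * psqrt Q = ((σ2:ℂ)) • (1 + H) := by
      rw [hHdef, hMxdef, hTQeq]
      simp only [Matrix.mul_add, Matrix.add_mul, Matrix.mul_smul, Matrix.smul_mul,
        smul_add, smul_smul, ← hsqdef, hKdef]
      rw [mul_inv_cancel₀ hσ2ne]
      simp only [one_smul, Matrix.mul_assoc]
      abel
    have hfixval : ((1 + H)⁻¹ * (sq * T * sq)).trace.re = σ2 * n * δt := by
      have hinvsmul : (((σ2:ℂ)) • (1 + H))⁻¹ = ((σ2:ℂ))⁻¹ • (1 + H)⁻¹ := by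
        apply Matrix.inv_eq_left_inv
        rw [Matrix.smul_mul, Matrix.mul_smul, smul_smul, inv_mul_cancel₀ hσ2ne, one_smul,
          Matrix.nonsing_inv_mul _ h1Hu]
      have e2 : (TQ T Q * (((σ2:ℂ)) • (1 + ((δ:ℂ)) • TQ T Q) +
          psqrt Q * Aᴴ * (1 + ((δt:ℂ)) • R)⁻¹ * A * psqrt Q)⁻¹).trace
          = ((σ2:ℂ))⁻¹ * ((1 + H)⁻¹ * (sq * T * sq)).trace := by
        rw [hDe, hinvsmul, Matrix.mul_smul, Matrix.trace_smul, smul_eq_mul]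
        congr 1
        rw [hTQeq, Matrix.trace_mul_comm]
      have := hfixt
      rw [fFPt, e2] at this
      rw [← Complex.ofReal_inv, Complex.re_ofReal_mul] at this
      rw [this]
      field_simp
    -- assemble
    have heq1 : (fun x => Vfun σ2 A R T Q x δt) =ᶠ[nhds δ]
        (fun x => Real.log ((X0 + ((x:ℂ)) • Y).det.re) +
          Real.log ((1 + ((δt:ℂ)) • R).det.re) - σ2 * n * x * δt) := by
      filter_upwards [Ioi_mem_nhds hδ] with x hx
      rw [Vfun, hdetEq x (le_of_lt hx), hrepr x]
    have hlin : HasDerivAt (fun x : ℝ => σ2 * n * x * δt) (σ2 * n * δt) δ := by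
      have := ((hasDerivAt_id δ).const_mul (σ2 * (n:ℝ))).mul_const δt
      simpa [mul_comm, mul_assoc, mul_left_comm] using this
    have hD : HasDerivAt
        (fun x : ℝ => Real.log ((X0 + ((x:ℂ)) • Y).det.re) +
          Real.log ((1 + ((δt:ℂ)) • R).det.re) - σ2 * n * x * δt)
        ((((X0 + ((δ:ℂ)) • Y)⁻¹ * Y).trace).re - σ2 * n * δt) δ :=
      (hlog1.add_const _).sub hlin
    have hval : (((X0 + ((δ:ℂ)) • Y)⁻¹ * Y).trace).re - σ2 * n * δt = 0 := by
      rw [htr, hfixval]; ring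
    rw [hval] at hD
    exact hD.congr_of_eventuallyEq heq1
  · -- ∂/∂κ̃
    set W : Matrix (Fin n) (Fin n) ℂ := 1 + ((δ:ℂ)) • TQ T Q with hWdef
    have hWpos : W.PosDef := posDef_one_add_smul' hδ.le hTQpsd
    have hWu : IsUnit W.det := isUnit_iff_ne_zero.mpr hWpos.det_pos.ne'
    set Cm : Matrix (Fin N) (Fin N) ℂ := A * psqrt Q * W⁻¹ * psqrt Q * Aᴴ with hCdef
    have hCpsd : Cm.PosSemidef := by
      have h' := (hWpos.inv).posSemidef.mul_mul_conjTranspose_same (A * sq)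
      have e : (A * sq) * W⁻¹ * (A * sq)ᴴ = Cm := by
        rw [conjTranspose_mul, hsqH, hCdef]
        simp only [Matrix.mul_assoc, hsqdef]
      rwa [e] at h'
    set Z0 : Matrix (Fin N) (Fin N) ℂ := 1 + ((σ2:ℂ))⁻¹ • Cm with hZ0def
    have hZrepr : ∀ x : ℝ, Z0 + ((x:ℂ)) • R = (1 + ((x:ℂ)) • R) + ((σ2:ℂ))⁻¹ • Cm := by
      intro x; rw [hZ0def]; abel
    have hZpos : ∀ x : ℝ, 0 ≤ x → (Z0 + ((x:ℂ)) • R).PosDef := by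
      intro x hx
      rw [hZrepr]
      refine Matrix.PosDef.add_posSemidef (posDef_one_add_smul' hx hR) ?_
      rw [← Complex.ofReal_inv]
      exact posSemidef_ofReal_smul (by positivity) hCpsd
    -- the constant matrix P with P⁻¹ * Q = sq * W⁻¹ * sq
    set P : Matrix (Fin n) (Fin n) ℂ := 1 + ((δ:ℂ)) • (Q * T) with hPdef
    have hPsand : P = 1 + (sq * sq) * (((δ:ℂ)) • T) := by
      rw [hPdef]
      have e : (sq * sq) * (((δ:ℂ)) • T) = ((δ:ℂ)) • (Q * T) := by
        rw [Matrix.mul_smul, hsqQ]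
      rw [e]
    have hsand2 : sq * (((δ:ℂ)) • T) * sq = ((δ:ℂ)) • (sq * T * sq) := by
      rw [Matrix.mul_smul, Matrix.smul_mul]
    have hPdetW : P.det = W.det := by
      rw [hPsand, det_one_add_sandwich, hsand2, hWdef, hTQeq]
    have hPu : IsUnit P.det := by rw [hPdetW]; exact hWu
    have hPQ : P⁻¹ * Q = sq * W⁻¹ * sq := by
      rw [hPsand, ← hsqQ]
      have h' := inv_one_add_sandwich sq (((δ:ℂ)) • T)
        (by rw [hsand2, ← hTQeq, ← hWdef]; exact hWu)
      rwa [hsand2, ← hTQeq, ← hWdef] at h'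
    -- the matrix family in κ̃
    set Mx' : ℝ → Matrix (Fin n) (Fin n) ℂ :=
      fun x => ((δ:ℂ)) • T + ((σ2:ℂ))⁻¹ • (Aᴴ * (1 + ((x:ℂ)) • R)⁻¹ * A) with hMx'def
    have hM'psd : ∀ x : ℝ, 0 ≤ x → (Mx' x).PosSemidef := by
      intro x hx
      refine (posSemidef_ofReal_smul hδ.le hT).add ?_
      rw [← Complex.ofReal_inv]
      exact posSemidef_ofReal_smul (by positivity)
        (((posDef_one_add_smul' hx hR).inv).posSemidef.conjTranspose_mul_mul_same A)
    have hGM2 : ∀ x : ℝ, Gmat σ2 A R T δ x = psqrt (Mx' x) := fun x => rfl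
    have hdetEq2 : ∀ x : ℝ, 0 ≤ x →
        (1 + Gmat σ2 A R T δ x * Q * Gmat σ2 A R T δ x).det = (1 + Q * Mx' x).det := by
      intro x hx
      have hM := hM'psd x hx
      have hGG : psqrt (Mx' x) * psqrt (Mx' x) = Mx' x := by
        exact psqrt_mul_self hM
      rw [hGM2]
      calc (1 + psqrt (Mx' x) * Q * psqrt (Mx' x)).det
          = (1 + psqrt (Mx' x) * (Q * psqrt (Mx' x))).det := by rw [Matrix.mul_assoc]
        _ = (1 + Q * psqrt (Mx' x) * psqrt (Mx' x)).det := Matrix.det_one_add_mul_comm _ _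
        _ = (1 + Q * Mx' x).det := by rw [Matrix.mul_assoc, hGG]
    -- positivity of det(1 + Q * Mx' x)
    have hd1pos : ∀ x : ℝ, 0 ≤ x → (0:ℂ) < (1 + Q * Mx' x).det := by
      intro x hx
      have hHpsd' : (sq * Mx' x * sq).PosSemidef := by
        have h' := (hM'psd x hx).conjTranspose_mul_mul_same sq
        rwa [hsqH] at h'
      have h1H' : (1 + sq * Mx' x * sq).PosDef :=
        Matrix.PosDef.add_posSemidef Matrix.PosDef.one hHpsd'
      have e : (1 + Q * Mx' x).det = (1 + sq * Mx' x * sq).det := by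
        rw [← hsqQ]; exact det_one_add_sandwich sq (Mx' x)
      rw [e]; exact h1H'.det_pos
    -- the key determinant identity
    have hKeyDet : ∀ x : ℝ, 0 ≤ x →
        (1 + Q * Mx' x).det * ((1:Matrix (Fin N) (Fin N) ℂ) + ((x:ℂ)) • R).det
          = W.det * (Z0 + ((x:ℂ)) • R).det := by
      intro x hx
      have hxRu : IsUnit ((1:Matrix (Fin N) (Fin N) ℂ) + ((x:ℂ)) • R).det :=
        isUnit_iff_ne_zero.mpr (posDef_one_add_smul' hx hR).det_pos.ne'
      set M1 : Matrix (Fin n) (Fin N) ℂ := ((σ2:ℂ))⁻¹ • (P⁻¹ * (Q * Aᴴ)) with hM1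
      set M2 : Matrix (Fin N) (Fin n) ℂ := (1 + ((x:ℂ)) • R)⁻¹ * A with hM2
      have step1 : (1:Matrix (Fin n) (Fin n) ℂ) + Q * Mx' x = P * (1 + M1 * M2) := by
        rw [hM1, hM2, hMx'def]
        simp only [Matrix.mul_add, Matrix.mul_one, Matrix.mul_smul, Matrix.smul_mul,
          ← Matrix.mul_assoc]
        rw [Matrix.mul_nonsing_inv _ hPu, Matrix.one_mul, hPdef]
        abel
      have step2 : ((1:Matrix (Fin n) (Fin n) ℂ) + M1 * M2).det
          = ((1:Matrix (Fin N) (Fin N) ℂ) + M2 * M1).det := Matrix.det_one_add_mul_comm _ _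
      have step3 : ((1:Matrix (Fin N) (Fin N) ℂ) + ((x:ℂ)) • R) * (1 + M2 * M1)
          = Z0 + ((x:ℂ)) • R := by
        rw [hM1, hM2]
        simp only [Matrix.mul_add, Matrix.mul_one, Matrix.mul_smul, Matrix.smul_mul,
          ← Matrix.mul_assoc]
        rw [Matrix.mul_nonsing_inv _ hxRu, Matrix.one_mul, hZrepr]
        have e : A * P⁻¹ * Q * Aᴴ = Cm := by
          have e2 : A * P⁻¹ * Q = A * (sq * W⁻¹ * sq) := by
            rw [Matrix.mul_assoc, hPQ]
          rw [e2, hCdef]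
          simp only [Matrix.mul_assoc, hsqdef]
        rw [e]
      calc (1 + Q * Mx' x).det * ((1:Matrix (Fin N) (Fin N) ℂ) + ((x:ℂ)) • R).det
          = (P.det * ((1:Matrix (Fin n) (Fin n) ℂ) + M1 * M2).det)
            * ((1:Matrix (Fin N) (Fin N) ℂ) + ((x:ℂ)) • R).det := by
            rw [step1, Matrix.det_mul]
        _ = P.det * (((1:Matrix (Fin N) (Fin N) ℂ) + ((x:ℂ)) • R).det
            * ((1:Matrix (Fin N) (Fin N) ℂ) + M2 * M1).det) := by rw [step2]; ring
        _ = P.det * (Z0 + ((x:ℂ)) • R).det := by rw [← Matrix.det_mul, step3]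
        _ = W.det * (Z0 + ((x:ℂ)) • R).det := by rw [hPdetW]
    -- eventual equality
    have heq2 : (fun x => Vfun σ2 A R T Q δ x) =ᶠ[nhds δt]
        (fun x => Real.log (W.det.re) + Real.log ((Z0 + ((x:ℂ)) • R).det.re)
          - σ2 * n * δ * x) := by
      filter_upwards [Ioi_mem_nhds hδt] with x hx
      have hx0 : (0:ℝ) ≤ x := le_of_lt hx
      have hd1 := hd1pos x hx0
      have hd2 : (0:ℂ) < ((1:Matrix (Fin N) (Fin N) ℂ) + ((x:ℂ)) • R).det :=
        (posDef_one_add_smul' hx0 hR).det_pos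
      have hdW : (0:ℂ) < W.det := hWpos.det_pos
      have hdZ : (0:ℂ) < (Z0 + ((x:ℂ)) • R).det := (hZpos x hx0).det_pos
      have h12 : (1 + Q * Mx' x).det.re * ((1:Matrix (Fin N) (Fin N) ℂ) + ((x:ℂ)) • R).det.re
          = W.det.re * (Z0 + ((x:ℂ)) • R).det.re := by
        have him1 : (1 + Q * Mx' x).det.im = 0 := ((Complex.lt_def.mp hd1).2).symm
        have himW : W.det.im = 0 := ((Complex.lt_def.mp hdW).2).symm
        have hc := congrArg Complex.re (hKeyDet x hx0)
        rwa [Complex.mul_re, Complex.mul_re, him1, himW, zero_mul, sub_zero, zero_mul,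
          sub_zero] at hc
      have hlogs : Real.log ((1 + Q * Mx' x).det.re)
          + Real.log (((1:Matrix (Fin N) (Fin N) ℂ) + ((x:ℂ)) • R).det.re)
          = Real.log (W.det.re) + Real.log ((Z0 + ((x:ℂ)) • R).det.re) := by
        rw [← Real.log_mul (Complex.lt_def.mp hd1).1.ne' (Complex.lt_def.mp hd2).1.ne', h12,
          Real.log_mul (Complex.lt_def.mp hdW).1.ne' (Complex.lt_def.mp hdZ).1.ne']
      rw [Vfun, hdetEq2 x hx0]
      linarith [hlogs]
    -- the derivative of the affine log part
    have hlog2 := hasDerivAt_log_det_affine Z0 R δt (hZpos δt hδt.le).det_pos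
    have hlin2 : HasDerivAt (fun x : ℝ => σ2 * n * δ * x) (σ2 * n * δ) δt := by
      have := (hasDerivAt_id δt).const_mul (σ2 * (n:ℝ) * δ)
      simpa [mul_comm, mul_assoc, mul_left_comm] using this
    have hD2 : HasDerivAt
        (fun x : ℝ => Real.log (W.det.re) + Real.log ((Z0 + ((x:ℂ)) • R).det.re)
          - σ2 * n * δ * x)
        ((((Z0 + ((δt:ℂ)) • R)⁻¹ * R).trace).re - σ2 * n * δ) δt :=
      (hlog2.const_add _).sub hlin2
    -- the fixed-point identity
    have hZu : IsUnit (Z0 + ((δt:ℂ)) • R).det :=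
      isUnit_iff_ne_zero.mpr (hZpos δt hδt.le).det_pos.ne'
    have hDe' : ((σ2:ℂ)) • (1 + ((δt:ℂ)) • R) + Cm = ((σ2:ℂ)) • (Z0 + ((δt:ℂ)) • R) := by
      rw [hZrepr δt]
      simp only [smul_add, smul_smul]
      rw [mul_inv_cancel₀ hσ2ne, one_smul]
    have hinv2 : (((σ2:ℂ)) • (Z0 + ((δt:ℂ)) • R))⁻¹ = ((σ2:ℂ))⁻¹ • (Z0 + ((δt:ℂ)) • R)⁻¹ := by
      apply Matrix.inv_eq_left_inv
      rw [Matrix.smul_mul, Matrix.mul_smul, smul_smul, inv_mul_cancel₀ hσ2ne, one_smul,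
        Matrix.nonsing_inv_mul _ hZu]
    have hfixval2 : (((Z0 + ((δt:ℂ)) • R)⁻¹ * R).trace).re = σ2 * n * δ := by
      have e3 : (R * (((σ2:ℂ)) • (1 + ((δt:ℂ)) • R) + Cm)⁻¹).trace
          = ((σ2:ℂ))⁻¹ * ((Z0 + ((δt:ℂ)) • R)⁻¹ * R).trace := by
        rw [hDe', hinv2, Matrix.mul_smul, Matrix.trace_smul, smul_eq_mul]
        congr 1
        rw [Matrix.trace_mul_comm]
      have hthis := hfix
      rw [fFP] at hthis
      rw [← hWdef, ← hCdef] at hthis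
      rw [e3, ← Complex.ofReal_inv, Complex.re_ofReal_mul] at hthis
      rw [hthis]
      field_simp
    have hval2 : (((Z0 + ((δt:ℂ)) • R)⁻¹ * R).trace).re - σ2 * n * δ = 0 := by
      rw [hfixval2]; ring
    rw [hval2] at hD2
    exact hD2.congr_of_eventuallyEq heq2
end

section
/- Waterfilling solution: let G be a positive definite Hermitian n×n matrix with eigendecomposition G² = V D V^H, D = diag(d₁,…,d_n) with d_i > 0. The maximizer over C_1 of U(Q̃) = log det(I + G Q̃ G) is Q̃* = V diag(q₁,…,q_n) V^H where q_i = max(μ − 1/d_i, 0) and μ is chosen so that (1/n)·Σ q_i = 1. -/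
open Matrix
open scoped ComplexOrder

namespace Waterfill

variable {n : ℕ}

lemma conj_mul (V : Matrix (Fin n) (Fin n) ℂ) (hV2 : Vᴴ * V = 1)
    (f g : Fin n → ℂ) :
    (V * diagonal f * Vᴴ) * (V * diagonal g * Vᴴ)
      = V * diagonal (fun i => f i * g i) * Vᴴ := by
  have h : (V * diagonal f * Vᴴ) * (V * diagonal g * Vᴴ)
      = V * (diagonal f * (Vᴴ * V) * diagonal g) * Vᴴ := by
    simp only [Matrix.mul_assoc]
  rw [h, hV2, mul_one, diagonal_mul_diagonal]

lemma conj_add (V : Matrix (Fin n) (Fin n) ℂ) (f g : Fin n → ℂ) :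
    (V * diagonal f * Vᴴ) + (V * diagonal g * Vᴴ)
      = V * diagonal (fun i => f i + g i) * Vᴴ := by
  rw [← Matrix.add_mul, ← Matrix.mul_add, ← diagonal_add]

lemma conj_one (V : Matrix (Fin n) (Fin n) ℂ) (hV1 : V * Vᴴ = 1) :
    (1 : Matrix (Fin n) (Fin n) ℂ) = V * diagonal (fun _ => 1) * Vᴴ := by
  rw [diagonal_one, mul_one, hV1]

lemma conj_trace (V : Matrix (Fin n) (Fin n) ℂ) (hV2 : Vᴴ * V = 1)
    (f : Fin n → ℂ) : (V * diagonal f * Vᴴ).trace = ∑ i, f i := by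
  rw [trace_mul_cycle, hV2, one_mul, trace_diagonal]

lemma conj_det (V : Matrix (Fin n) (Fin n) ℂ) (hV1 : V * Vᴴ = 1)
    (f : Fin n → ℂ) : (V * diagonal f * Vᴴ).det = ∏ i, f i := by
  rw [det_mul_right_comm, hV1, one_mul, det_diagonal]

lemma conj_psd (V : Matrix (Fin n) (Fin n) ℂ) (f : Fin n → ℝ)
    (hf : ∀ i, 0 ≤ f i) :
    (V * diagonal (fun i => (f i : ℂ)) * Vᴴ).PosSemidef := by
  have h : (diagonal (fun i => ((f i : ℝ) : ℂ))).PosSemidef :=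
    PosSemidef.diagonal (fun i => Complex.zero_le_real.2 (hf i))
  exact h.mul_mul_conjTranspose_same V

lemma conj_trace_mul (V : Matrix (Fin n) (Fin n) ℂ)
    (f : Fin n → ℂ) (Q : Matrix (Fin n) (Fin n) ℂ) :
    (V * diagonal f * Vᴴ * Q).trace = ∑ i, f i * (Vᴴ * Q * V) i i := by
  rw [Matrix.mul_assoc, trace_mul_cycle]
  simp [Matrix.trace, Matrix.diag, Matrix.mul_diagonal, mul_comm]

lemma psd_diag_nonneg {M : Matrix (Fin n) (Fin n) ℂ} (hM : M.PosSemidef)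
    (i : Fin n) : 0 ≤ M i i := by
  exact hM.diag_nonneg

lemma herm_trace (M : Matrix (Fin n) (Fin n) ℂ) (hM : M.IsHermitian) :
    M.trace = ((∑ i, hM.eigenvalues i : ℝ) : ℂ) := by
  conv_lhs => rw [hM.spectral_theorem]
  rw [Unitary.conjStarAlgAut_apply, trace_mul_cycle]
  rw [Matrix.mem_unitaryGroup_iff'.mp (hM.eigenvectorUnitary).2, one_mul,
    trace_diagonal]
  push_cast
  rfl

lemma log_det_le_trace (M : Matrix (Fin n) (Fin n) ℂ)
    (hM : M.PosSemidef) (hdet : M.det ≠ 0) :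
    Real.log M.det.re ≤ M.trace.re - n := by
  have hdetM : M.det = ((∏ i, hM.1.eigenvalues i : ℝ) : ℂ) := by
    rw [hM.1.det_eq_prod_eigenvalues]; push_cast; rfl
  have htr : M.trace = ((∑ i, hM.1.eigenvalues i : ℝ) : ℂ) := herm_trace M hM.1
  have hne : ∀ i, hM.1.eigenvalues i ≠ 0 := by
    intro i h0
    apply hdet
    rw [hdetM]
    norm_cast
    exact Finset.prod_eq_zero (Finset.mem_univ i) h0
  have hpos : ∀ i, 0 < hM.1.eigenvalues i :=
    fun i => lt_of_le_of_ne (hM.eigenvalues_nonneg i) (Ne.symm (hne i))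
  rw [hdetM, htr, Complex.ofReal_re, Complex.ofReal_re]
  rw [Real.log_prod fun i _ => hne i]
  calc ∑ i, Real.log (hM.1.eigenvalues i)
      ≤ ∑ i, (hM.1.eigenvalues i - 1) :=
        Finset.sum_le_sum fun i _ => Real.log_le_sub_one_of_pos (hpos i)
    _ = (∑ i, hM.1.eigenvalues i) - n := by
        rw [Finset.sum_sub_distrib]
        simp

end Waterfill


/-- `C₁`: n×n positive semidefinite Hermitian matrices with `(1/n)·Tr(Q̃) = 1`. -/
def C1 (n : ℕ) : Set (Matrix (Fin n) (Fin n) ℂ) :=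
  {Q | Q.PosSemidef ∧ Q.trace = (n : ℂ)}

/-- Waterfilling solution: if `G` is positive definite Hermitian with
`G² = V·diag(d₁,…,d_n)·Vᴴ`, `d_i > 0`, `V` unitary, and `μ` satisfies the
normalization `(1/n)·Σᵢ max(μ − 1/dᵢ, 0) = 1`, then
`Q̃* = V·diag(q₁,…,q_n)·Vᴴ` with `qᵢ = max(μ − 1/dᵢ, 0)` maximizes
`Q̃ ↦ log det(I + G Q̃ G)` over `C₁`. -/
theorem waterfilling_solution {n : ℕ} (hn : 0 < n)
    (G : Matrix (Fin n) (Fin n) ℂ) (hG : G.PosDef)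
    (V : Matrix (Fin n) (Fin n) ℂ) (hV : V ∈ Matrix.unitaryGroup (Fin n) ℂ)
    (d : Fin n → ℝ) (hd : ∀ i, 0 < d i)
    (hdecomp : G * G = V * Matrix.diagonal (fun i => ((d i : ℝ) : ℂ)) * Vᴴ)
    (μ : ℝ) (hμ : ((1 : ℝ) / n) * ∑ i, max (μ - 1 / d i) 0 = 1) :
    (V * Matrix.diagonal (fun i => ((max (μ - 1 / d i) 0 : ℝ) : ℂ)) * Vᴴ) ∈ C1 n ∧
    IsMaxOn (fun Q => Real.log ((1 + G * Q * G).det.re)) (C1 n)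
      (V * Matrix.diagonal (fun i => ((max (μ - 1 / d i) 0 : ℝ) : ℂ)) * Vᴴ) := by
  classical
  have hV1 : V * Vᴴ = 1 := by
    simpa [Matrix.star_eq_conjTranspose] using Matrix.mem_unitaryGroup_iff.mp hV
  have hV2 : Vᴴ * V = 1 := by
    simpa [Matrix.star_eq_conjTranspose] using Matrix.mem_unitaryGroup_iff'.mp hV
  -- scalar setup
  set q : Fin n → ℝ := fun i => max (μ - 1 / d i) 0 with hqdef
  have hq0 : ∀ i, 0 ≤ q i := fun i => le_max_right _ _
  have hn' : (n : ℝ) ≠ 0 := Nat.cast_ne_zero.2 hn.ne'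
  have hsum : ∑ i, q i = n := by
    field_simp at hμ
    linarith [hμ]
  have hμpos : 0 < μ := by
    by_contra h
    push_neg at h
    have hz : ∀ i, q i = 0 := by
      intro i
      have h1 : 0 < 1 / d i := one_div_pos.mpr (hd i)
      exact max_eq_right (by linarith)
    have : (0 : ℝ) = n := by
      rw [← hsum]
      simp [hz]
    exact hn' (by exact_mod_cast this.symm)
  set s : Fin n → ℝ := fun i => Real.sqrt (d i) with hsdef
  have hs0 : ∀ i, 0 ≤ s i := fun i => Real.sqrt_nonneg _
  have hss : ∀ i, s i * s i = d i := fun i => Real.mul_self_sqrt (hd i).le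
  set c : Fin n → ℝ := fun i => 1 + d i * q i with hcdef
  have hc : ∀ i, 0 < c i := by
    intro i
    have h1 : 0 ≤ d i * q i := mul_nonneg (hd i).le (hq0 i)
    simp only [hcdef]
    linarith
  set lam : Fin n → ℝ := fun i => d i / c i with hlamdef
  set u : Fin n → ℝ := fun i => 1 / c i with hudef
  set t : Fin n → ℝ := fun i => (Real.sqrt (c i))⁻¹ with htdef
  have ht0 : ∀ i, 0 ≤ t i := fun i => by positivity
  have htt : ∀ i, t i * t i = u i := by
    intro i
    simp only [htdef, hudef, ← mul_inv]
    rw [Real.mul_self_sqrt (hc i).le]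
    rw [one_div]
  have hlam_le : ∀ i, lam i ≤ 1 / μ := by
    intro i
    rcases le_or_gt (μ - 1 / d i) 0 with h | h
    · have hq : q i = 0 := max_eq_right h
      have h1 : μ ≤ 1 / d i := by linarith
      have h2 : d i ≤ 1 / μ := by
        rw [le_div_iff₀ hμpos]
        calc d i * μ ≤ d i * (1 / d i) :=
          mul_le_mul_of_nonneg_left h1 (hd i).le
        _ = 1 := by
          rw [mul_one_div, div_self (hd i).ne']
      simp only [hlamdef, hcdef, hq, mul_zero, add_zero, div_one]
      exact h2
    · have hq : q i = μ - 1 / d i := max_eq_left h.le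
      have hci : c i = d i * μ := by
        simp only [hcdef]
        rw [hq, mul_sub, mul_one_div, div_self (hd i).ne']
        ring
      simp only [hlamdef, hci]
      rw [show d i / (d i * μ) = 1 / μ by
        rw [show d i / (d i * μ) = d i * 1 / (d i * μ) by rw [mul_one],
          mul_div_mul_left _ _ (hd i).ne']]
  have hlamq : ∀ i, lam i * q i = q i / μ := by
    intro i
    rcases le_or_gt (μ - 1 / d i) 0 with h | h
    · have hq : q i = 0 := max_eq_right h
      simp [hq]
    · have hq : q i = μ - 1 / d i := max_eq_left h.le
      have hci : c i = d i * μ := by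
        simp only [hcdef]
        rw [hq, mul_sub, mul_one_div, div_self (hd i).ne']
        ring
      simp only [hlamdef, hci]
      rw [show d i / (d i * μ) = 1 / μ by
        rw [show d i / (d i * μ) = d i * 1 / (d i * μ) by rw [mul_one],
          mul_div_mul_left _ _ (hd i).ne']]
      rw [one_div, inv_mul_eq_div]
  have hulam : ∀ i, u i + lam i * q i = 1 := by
    intro i
    have h1 : u i + lam i * q i = (1 + d i * q i) / c i := by
      simp only [hudef, hlamdef]
      rw [div_mul_eq_mul_div, ← add_div]
    rw [h1, show (1 + d i * q i) = c i from rfl, div_self (hc i).ne']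
  -- G is V diag(s) Vᴴ
  have hSpsd : (V * diagonal (fun i => ((s i : ℝ) : ℂ)) * Vᴴ).PosSemidef :=
    Waterfill.conj_psd V s hs0
  have hGeq : G = V * diagonal (fun i => ((s i : ℝ) : ℂ)) * Vᴴ := by
    open MatrixOrder in
    apply (CFC.sq_eq_sq_iff G _ hG.posSemidef.nonneg hSpsd.nonneg).mp
    rw [pow_two, pow_two, hdecomp, Waterfill.conj_mul V hV2]
    have hfun : (fun i => ((s i : ℝ) : ℂ) * ((s i : ℝ) : ℂ))
        = fun i => ((d i : ℝ) : ℂ) := by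
      funext i
      rw [← Complex.ofReal_mul, hss i]
    rw [hfun]
  -- membership
  have hQstar_psd : (V * diagonal (fun i => ((q i : ℝ) : ℂ)) * Vᴴ).PosSemidef :=
    Waterfill.conj_psd V q hq0
  have hQstar_tr : (V * diagonal (fun i => ((q i : ℝ) : ℂ)) * Vᴴ).trace = (n : ℂ) := by
    rw [Waterfill.conj_trace V hV2]
    push_cast [← hsum]
    norm_cast
  refine ⟨⟨hQstar_psd, hQstar_tr⟩, ?_⟩
  -- value at Qstar
  have hB : 1 + G * (V * diagonal (fun i => ((q i : ℝ) : ℂ)) * Vᴴ) * G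
      = V * diagonal (fun i => ((c i : ℝ) : ℂ)) * Vᴴ := by
    rw [hGeq, Waterfill.conj_mul V hV2, Waterfill.conj_mul V hV2,
      Waterfill.conj_one V hV1, Waterfill.conj_add V]
    have hfun : (fun i => (1 : ℂ) + ((s i : ℝ) : ℂ) * ((q i : ℝ) : ℂ) * ((s i : ℝ) : ℂ))
        = fun i => ((c i : ℝ) : ℂ) := by
      funext i
      simp only [hcdef]
      push_cast
      rw [show ((s i : ℝ) : ℂ) * ((q i : ℝ) : ℂ) * ((s i : ℝ) : ℂ)
          = (((s i : ℝ) : ℂ) * ((s i : ℝ) : ℂ)) * ((q i : ℝ) : ℂ) by ring,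
        ← Complex.ofReal_mul, hss i]
    rw [hfun]
  have hcprod_pos : 0 < ∏ i, c i := Finset.prod_pos fun i _ => hc i
  have hBdet : (1 + G * (V * diagonal (fun i => ((q i : ℝ) : ℂ)) * Vᴴ) * G).det.re
      = ∏ i, c i := by
    rw [hB, Waterfill.conj_det V hV1]
    norm_cast
  rw [isMaxOn_iff]
  intro Q hQ
  obtain ⟨hQpsd, hQtr⟩ := hQ
  show Real.log ((1 + G * Q * G).det.re)
      ≤ Real.log ((1 + G * (V * diagonal (fun i => ((q i : ℝ) : ℂ)) * Vᴴ) * G).det.re)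
  rw [hBdet]
  -- key matrices
  set A : Matrix (Fin n) (Fin n) ℂ := 1 + G * Q * G with hAdef
  have hGH : Gᴴ = G := hG.isHermitian
  have hGQG : (G * Q * G).PosSemidef := by
    have := hQpsd.mul_mul_conjTranspose_same G
    rwa [hGH] at this
  have hApd : A.PosDef := Matrix.PosDef.one.add_posSemidef hGQG
  set P : Matrix (Fin n) (Fin n) ℂ := V * diagonal (fun i => ((t i : ℝ) : ℂ)) * Vᴴ
    with hPdef
  have hPpsd : P.PosSemidef := Waterfill.conj_psd V t ht0
  set M : Matrix (Fin n) (Fin n) ℂ := P * A * P with hMdef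
  have hMpsd : M.PosSemidef := by
    have := hApd.posSemidef.mul_mul_conjTranspose_same P
    rwa [hPpsd.1.eq] at this
  -- determinant relations
  have hPdet : P.det = ((∏ i, t i : ℝ) : ℂ) := by
    rw [hPdef, Waterfill.conj_det V hV1]
    norm_cast
  have hAdet_pos : (0 : ℂ) < A.det := hApd.det_pos
  have hAdet_re : 0 < A.det.re := (Complex.lt_def.mp hAdet_pos).1
  have hAdet_im : A.det.im = 0 := ((Complex.lt_def.mp hAdet_pos).2).symm
  have hMdet_eq : M.det = P.det * A.det * P.det := by
    rw [hMdef, det_mul, det_mul]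
  have htprod_sq : (∏ i, t i) * (∏ i, t i) = (∏ i, c i)⁻¹ := by
    rw [← Finset.prod_mul_distrib]
    rw [← Finset.prod_inv_distrib]
    exact Finset.prod_congr rfl fun i _ => by rw [htt i]; simp [hudef, one_div]
  have hMdet_re : M.det.re = (∏ i, c i)⁻¹ * A.det.re := by
    have : M.det = (((∏ i, c i)⁻¹ : ℝ) : ℂ) * A.det := by
      rw [hMdet_eq, hPdet]
      push_cast [← htprod_sq]
      ring
    rw [this, Complex.re_ofReal_mul]
  have hMre_pos : 0 < M.det.re := by
    rw [hMdet_re]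
    exact mul_pos (inv_pos.2 hcprod_pos) hAdet_re
  have hMdet_ne : M.det ≠ 0 := by
    intro h0
    rw [h0, Complex.zero_re] at hMre_pos
    exact lt_irrefl _ hMre_pos
  -- trace of M
  set Q' : Matrix (Fin n) (Fin n) ℂ := Vᴴ * Q * V with hQ'def
  have hQ'psd : Q'.PosSemidef := by
    have := hQpsd.conjTranspose_mul_mul_same V
    rwa [← hQ'def] at this
  have hQ'diag : ∀ i, 0 ≤ (Q' i i).re ∧ (Q' i i).im = 0 := by
    intro i
    have h := Waterfill.psd_diag_nonneg hQ'psd i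
    have := Complex.le_def.mp h
    exact ⟨this.1, this.2.symm⟩
  have hQ'tr : ∑ i, (Q' i i).re = n := by
    have h : Q'.trace = (n : ℂ) := by
      rw [hQ'def, trace_mul_cycle, hV1, one_mul, hQtr]
    have := congrArg Complex.re h
    rw [Matrix.trace] at this
    simpa [Matrix.diag] using this
  have hMtr : M.trace.re = (∑ i, u i) + ∑ i, lam i * (Q' i i).re := by
    have hPP : P * P = V * diagonal (fun i => ((u i : ℝ) : ℂ)) * Vᴴ := by
      rw [hPdef, Waterfill.conj_mul V hV2]
      have hfun : (fun i => ((t i : ℝ) : ℂ) * ((t i : ℝ) : ℂ))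
          = fun i => ((u i : ℝ) : ℂ) := by
        funext i
        rw [← Complex.ofReal_mul, htt i]
      rw [hfun]
    have hPA : M = P * P + (P * G) * Q * (G * P) := by
      rw [hMdef, hAdef]
      noncomm_ring
    have hPG : P * G = V * diagonal (fun i => ((t i * s i : ℝ) : ℂ)) * Vᴴ := by
      rw [hPdef, hGeq, Waterfill.conj_mul V hV2]
      have hfun : (fun i => ((t i : ℝ) : ℂ) * ((s i : ℝ) : ℂ))
          = fun i => ((t i * s i : ℝ) : ℂ) := by
        funext i
        rw [← Complex.ofReal_mul]
      rw [hfun]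
    have hGP : G * P = V * diagonal (fun i => ((s i * t i : ℝ) : ℂ)) * Vᴴ := by
      rw [hPdef, hGeq, Waterfill.conj_mul V hV2]
      have hfun : (fun i => ((s i : ℝ) : ℂ) * ((t i : ℝ) : ℂ))
          = fun i => ((s i * t i : ℝ) : ℂ) := by
        funext i
        rw [← Complex.ofReal_mul]
      rw [hfun]
    have hterm : ((P * G) * Q * (G * P)).trace
        = ∑ i, ((lam i : ℝ) : ℂ) * Q' i i := by
      rw [trace_mul_cycle, hPG, hGP, Waterfill.conj_mul V hV2]
      have h2 : (fun i => ((s i * t i : ℝ) : ℂ) * ((t i * s i : ℝ) : ℂ))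
          = fun i => ((lam i : ℝ) : ℂ) := by
        funext i
        push_cast
        rw [show (s i : ℂ) * t i * ((t i) * (s i)) = ((s i * s i) * (t i * t i) : ℝ) by
          push_cast; ring]
        rw [hss i, htt i]
        simp only [hlamdef, hudef]
        push_cast
        ring
      rw [h2, Waterfill.conj_trace_mul V]
    have : M.trace = (((∑ i, u i : ℝ)) : ℂ) + ∑ i, ((lam i : ℝ) : ℂ) * Q' i i := by
      rw [hPA, trace_add, hPP, Waterfill.conj_trace V hV2, hterm]
      push_cast
      rfl
    rw [this]
    simp only [Complex.add_re, Complex.ofReal_re]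
    congr 1
    rw [Complex.re_sum]
    exact Finset.sum_congr rfl fun i _ => by rw [Complex.re_ofReal_mul]
  -- assemble
  have hlog : Real.log M.det.re ≤ M.trace.re - n :=
    Waterfill.log_det_le_trace M hMpsd hMdet_ne
  have hArel : Real.log A.det.re = Real.log (∏ i, c i) + Real.log M.det.re := by
    have h1 : A.det.re = (∏ i, c i) * M.det.re := by
      rw [hMdet_re]
      field_simp
    rw [h1, Real.log_mul hcprod_pos.ne' hMre_pos.ne']
  have hbound : M.trace.re - n ≤ 0 := by
    rw [hMtr]
    have h1 : ∑ i, lam i * (Q' i i).re ≤ ∑ i, (1 / μ) * (Q' i i).re :=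
      Finset.sum_le_sum fun i _ =>
        mul_le_mul_of_nonneg_right (hlam_le i) (hQ'diag i).1
    have h2 : ∑ i, (1 / μ) * (Q' i i).re = n / μ := by
      rw [← Finset.mul_sum, hQ'tr]
      ring
    have h3 : (∑ i, u i) + (n : ℝ) / μ = n := by
      have h4 : ∑ i, (u i + lam i * q i) = (n : ℝ) := by
        simp_rw [hulam]
        simp
      conv_rhs => rw [← h4]
      rw [Finset.sum_add_distrib]
      congr 1
      simp_rw [hlamq]
      rw [← Finset.sum_div, hsum]
    linarith
  calc Real.log A.det.re = Real.log (∏ i, c i) + Real.log M.det.re := hArel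
    _ ≤ Real.log (∏ i, c i) + (M.trace.re - n) := by linarith
    _ ≤ Real.log (∏ i, c i) := by linarith
end
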